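/- Let X, Y be real random variables and let Ū be uniformly distributed on [U/2, U] for some U > 0, independent of X and Y. Suppose |X − X'| ≤ 2ε and |Y − Y'| ≤ 2ε for reals X', Y' and some ε > 0. Then the probability that the indicator of the event {X + ε̃ < Y − Ū} differs from the indicator of {X' + ε̃ < Y' − Ū} is at most 8ε/ (U/2) = 16 ε / U, where ε̃ is any fixed real. -/

import Mathlib

open MeasureTheory

/-- The uniform probability measure on the interval `[U/2, U]`. -/
noncomputable def uniformOnIcc (U : ℝ) : Measure ℝ :=
  (ENNReal.ofReal (2 / U)) • (volume.restrict (Set.Icc (U / 2) U))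

theorem stmt_4 (U ε εtilde X Y X' Y' : ℝ) (hU : 0 < U) (hε : 0 < ε)
    (hX : |X - X'| ≤ 2 * ε) (hY : |Y - Y'| ≤ 2 * ε) :
    uniformOnIcc U {u : ℝ | ¬((X + εtilde < Y - u) ↔ (X' + εtilde < Y' - u))}
      ≤ ENNReal.ofReal (16 * ε / U) := by
  obtain ⟨hX1, hX2⟩ := abs_le.mp hX
  obtain ⟨hY1, hY2⟩ := abs_le.mp hY
  set t := Y - X - εtilde with ht
  set t' := Y' - X' - εtilde with ht'
  have hsub : {u : ℝ | ¬((X + εtilde < Y - u) ↔ (X' + εtilde < Y' - u))}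
      ⊆ Set.Ico (min t t') (max t t') := by
    intro u hu
    simp only [Set.mem_setOf_eq] at hu
    have h1 : (X + εtilde < Y - u) ↔ u < t := by
      rw [ht]; constructor <;> intro <;> linarith
    have h2 : (X' + εtilde < Y' - u) ↔ u < t' := by
      rw [ht']; constructor <;> intro <;> linarith
    rw [h1, h2] at hu
    by_cases h : u < t
    · have h' : t' ≤ u := by
        by_contra hc
        push_neg at hc
        exact hu (iff_of_true h hc)
      exact ⟨le_trans (min_le_right _ _) h', lt_of_lt_of_le h (le_max_left _ _)⟩
    · have h' : u < t' := by
        by_contra hc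
        push_neg at hc
        exact hu (iff_of_false h (not_lt.mpr hc))
      push_neg at h
      exact ⟨le_trans (min_le_left _ _) h, lt_of_lt_of_le h' (le_max_right _ _)⟩
  have habs : |t - t'| ≤ 4 * ε := by
    rw [abs_le, ht, ht']
    constructor <;> linarith
  have hd : max t t' - min t t' ≤ 4 * ε := by
    rw [max_sub_min_eq_abs]; rw [abs_sub_comm]; exact habs
  calc uniformOnIcc U {u : ℝ | ¬((X + εtilde < Y - u) ↔ (X' + εtilde < Y' - u))}
      ≤ uniformOnIcc U (Set.Ico (min t t') (max t t')) := measure_mono hsub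
    _ = ENNReal.ofReal (2 / U) * (volume.restrict (Set.Icc (U / 2) U)) (Set.Ico (min t t') (max t t')) := by
        simp [uniformOnIcc]
    _ ≤ ENNReal.ofReal (2 / U) * volume (Set.Ico (min t t') (max t t')) := by
        gcongr
        exact Measure.restrict_le_self
    _ = ENNReal.ofReal (2 / U) * ENNReal.ofReal (max t t' - min t t') := by
        rw [Real.volume_Ico]
    _ = ENNReal.ofReal (2 / U * (max t t' - min t t')) := by
        rw [ENNReal.ofReal_mul (by positivity)]
    _ ≤ ENNReal.ofReal (16 * ε / U) := by
        apply ENNReal.ofReal_le_ofReal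
        have h0 : (0:ℝ) ≤ 2 / U := by positivity
        have := mul_le_mul_of_nonneg_left hd h0
        have h2 : 2 / U * (4 * ε) ≤ 16 * ε / U := by
          rw [div_mul_eq_mul_div, div_le_div_iff₀ hU hU]
          nlinarith
        linarith
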